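/- Let w be a word of length k and define f_w(n) = ∑_{τ ∈ BSP(w,k)} falling(n+k - des_k(τ), 2k), where falling(m, j) = m(m-1)···(m-j+1). Then f_w(n) is divisible, as a polynomial in n, by the falling factorial (n+1)·n·(n-1)···(n-k+1). -/

import Mathlib

open Finset Polynomial

/-- A permutation `σ` of `{0, ..., n+k-1}` satisfies the order constraints of the
word `w ∈ {r,c}^k` (where `true` encodes the letter `c` and `false` encodes `r`):
for each `i < k`, the position of value `i` is before the position of value `n+i`
when `w i = c`, and after it when `w i = r`. -/
def StripConstraints (n k : ℕ) (w : Fin k → Bool) (σ : Equiv.Perm (Fin (n + k))) : Prop :=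
  ∀ i : Fin k,
    (w i = true →
      (σ.symm ⟨i.val, by have := i.isLt; omega⟩).val
        < (σ.symm ⟨n + i.val, by have := i.isLt; omega⟩).val) ∧
    (w i = false →
      (σ.symm ⟨n + i.val, by have := i.isLt; omega⟩).val
        < (σ.symm ⟨i.val, by have := i.isLt; omega⟩).val)

instance {n k : ℕ} (w : Fin k → Bool) (σ : Equiv.Perm (Fin (n + k))) :
    Decidable (StripConstraints n k w σ) :=
  inferInstanceAs (Decidable (∀ _ : Fin k, _ ∧ _))

/-- `σ` has no `n`-descent: `σ(j) - σ(j+1) ≤ n` for all consecutive positions. -/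
def NoNDescent (n : ℕ) {m : ℕ} (σ : Equiv.Perm (Fin m)) : Prop :=
  ∀ j j' : Fin m, j'.val = j.val + 1 → (σ j).val ≤ n + (σ j').val

instance {n m : ℕ} (σ : Equiv.Perm (Fin m)) : Decidable (NoNDescent n σ) :=
  inferInstanceAs (Decidable (∀ _ _ : Fin m, _ → _))

/-- The number of `n`-descents of `σ`. -/
def DesK (n : ℕ) {m : ℕ} (σ : Equiv.Perm (Fin m)) : ℕ :=
  (Finset.univ.filter fun j : Fin m =>
    ∃ j' : Fin m, j'.val = j.val + 1 ∧ n + (σ j').val < (σ j).val).card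

lemma desK_lt (k : ℕ) (hk : 1 ≤ k) (τ : Equiv.Perm (Fin (k + k))) : DesK k τ < k := by
  unfold DesK
  set S := Finset.univ.filter fun j : Fin (k + k) =>
    ∃ j' : Fin (k + k), j'.val = j.val + 1 ∧ k + (τ j').val < (τ j).val with hS
  have hcard : S.card ≤ (Finset.Ico (k + 1) (k + k)).card := by
    apply Finset.card_le_card_of_injOn (fun j => (τ j).val)
    · intro j hj
      simp only [hS, Finset.mem_coe, Finset.mem_filter, Finset.mem_univ, true_and] at hj
      obtain ⟨j', _, h2⟩ := hj
      have := (τ j).isLt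
      simp only [Finset.mem_coe, Finset.mem_Ico]
      omega
    · intro a _ b _ h
      exact τ.injective (Fin.val_injective h)
  have : (Finset.Ico (k + 1) (k + k)).card = k - 1 := by
    rw [Nat.card_Ico]; omega
  omega

theorem stmt12 (k : ℕ) (hk : 1 ≤ k) (w : Fin k → Bool) :
    (∏ j ∈ Finset.range (k + 1), (Polynomial.X + 1 - (j : Polynomial ℤ))) ∣
      ∑ τ ∈ Finset.univ.filter
          (fun τ : Equiv.Perm (Fin (k + k)) => StripConstraints k k w τ),
        ∏ j ∈ Finset.range (2 * k),
          (Polynomial.X + (k : Polynomial ℤ) - (DesK k τ : Polynomial ℤ)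
            - (j : Polynomial ℤ)) := by
  apply Finset.dvd_sum
  intro τ _
  set d := DesK k τ with hd
  have hdk : d < k := desK_lt k hk τ
  set e := k - 1 - d with he
  have hke : d + 1 + e = k := by omega
  have hsub : (Finset.range (k + 1)).image (· + e) ⊆ Finset.range (2 * k) := by
    intro x hx
    simp only [Finset.mem_image, Finset.mem_range] at hx ⊢
    obtain ⟨j, hj, rfl⟩ := hx
    omega
  have hcast : (k : Polynomial ℤ) = (d : Polynomial ℤ) + 1 + (e : Polynomial ℤ) := by
    rw [← hke]; push_cast; ring
  have heq : (∏ j ∈ Finset.range (k + 1), (Polynomial.X + 1 - (j : Polynomial ℤ)))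
      = ∏ j ∈ (Finset.range (k + 1)).image (· + e),
          (Polynomial.X + (k : Polynomial ℤ) - (d : Polynomial ℤ) - (j : Polynomial ℤ)) := by
    rw [Finset.prod_image (by intro a _ b _ h; simp only at h; omega)]
    apply Finset.prod_congr rfl
    intro j _
    rw [hcast]
    push_cast
    ring
  rw [heq]
  exact Finset.prod_dvd_prod_of_subset _ _ _ hsub
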